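/- The Jacobian determinant of the inversion map on the group of invertible elements of ℂ[t]/(tⁿ), in the coordinates given by coefficients, is (−1)ⁿ x₀^{−2n}, where x₀ is the constant term. -/

import Mathlib

namespace JacInv

variable (n : ℕ) (hn : 0 < n)

/-- extend a tuple by zero -/
def xe (x : Fin n → ℂ) (m : ℕ) : ℂ := if h : m < n then x ⟨m, h⟩ else 0

/-- the coefficients of the inverse, defined recursively -/
noncomputable def G (x : Fin n → ℂ) : ℕ → ℂ
  | 0 => (x ⟨0, hn⟩)⁻¹
  | (k+1) => -(x ⟨0, hn⟩)⁻¹ *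
      ∑ j ∈ (Finset.range (k+1)).attach,
        xe n x (k + 1 - (j : ℕ)) * G x j
  decreasing_by exact Finset.mem_range.mp j.2

noncomputable def Ghat (x : Fin n → ℂ) : Fin n → ℂ := fun k => G n hn x (k : ℕ)

lemma xe_zero (x : Fin n → ℂ) : xe n x 0 = x ⟨0, hn⟩ := by
  simp [xe, hn]

lemma xe_Ghat (y : Fin n → ℂ) (j : ℕ) (hj : j < n) :
    xe n (Ghat n hn y) j = G n hn y j := by
  simp [xe, Ghat, hj]

lemma G_spec (x : Fin n → ℂ) (hx : x ⟨0, hn⟩ ≠ 0) (k : ℕ) :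
    ∑ j ∈ Finset.range (k+1), xe n x (k - j) * G n hn x j
      = if k = 0 then 1 else 0 := by
  cases k with
  | zero => simp [G, xe, hn, mul_inv_cancel₀ hx]
  | succ k =>
      rw [Finset.sum_range_succ]
      have h1 : (G n hn x (k+1)) = -(x ⟨0, hn⟩)⁻¹ *
          ∑ j ∈ Finset.range (k+1), xe n x (k + 1 - j) * G n hn x j := by
        rw [G, ← Finset.sum_attach (Finset.range (k+1))
            (fun j => xe n x (k + 1 - j) * G n hn x j)]
      rw [h1, Nat.sub_self, xe_zero n hn]
      field_simp
      simp

/-- convolution double sum to single range sum -/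
lemma double_sum_eq (x y : Fin n → ℂ) (k : ℕ) (hk : k < n) :
    (∑ i : Fin n, ∑ j : Fin n,
      if (i : ℕ) + (j : ℕ) = k then x i * y j else 0)
    = ∑ j ∈ Finset.range (k+1), xe n x (k - j) * xe n y j := by
  rw [Finset.sum_comm]
  have h1 : ∀ j : Fin n, (∑ i : Fin n, if (i : ℕ) + (j : ℕ) = k then x i * y j else 0)
      = if (j : ℕ) ≤ k then xe n x (k - (j : ℕ)) * xe n y (j : ℕ) else 0 := by
    intro j
    by_cases hj : (j : ℕ) ≤ k
    · rw [if_pos hj]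
      have hlt : k - (j : ℕ) < n := lt_of_le_of_lt (Nat.sub_le _ _) hk
      rw [Finset.sum_eq_single (⟨k - (j : ℕ), hlt⟩ : Fin n)]
      · have : (k - (j : ℕ)) + (j : ℕ) = k := by omega
        rw [if_pos this]
        simp [xe, hlt, j.isLt]
      · intro b _ hb
        rw [if_neg]
        intro hbj
        apply hb
        have : (b : ℕ) = k - (j : ℕ) := by omega
        exact Fin.ext this
      · intro h; exact absurd (Finset.mem_univ _) h
    · rw [if_neg hj]
      apply Finset.sum_eq_zero
      intro i _
      rw [if_neg]; omega
  rw [Finset.sum_congr rfl (fun j _ => h1 j)]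
  rw [Fin.sum_univ_eq_sum_range
    (fun j => if j ≤ k then xe n x (k - j) * xe n y j else 0) n]
  rw [← Finset.sum_subset (Finset.range_subset_range.mpr hk)]
  · exact Finset.sum_congr rfl (fun j hj => by
      rw [if_pos (Nat.lt_succ_iff.mp (Finset.mem_range.mp hj))])
  · intro j _ hj
    rw [if_neg]; simpa [Nat.lt_succ_iff] using hj

lemma unique (x : Fin n → ℂ) (hx : x ⟨0, hn⟩ ≠ 0) (y z : ℕ → ℂ)
    (hy : ∀ k < n, ∑ j ∈ Finset.range (k+1), xe n x (k - j) * y j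
      = if k = 0 then 1 else 0)
    (hz : ∀ k < n, ∑ j ∈ Finset.range (k+1), xe n x (k - j) * z j
      = if k = 0 then 1 else 0) :
    ∀ k < n, y k = z k := by
  intro k
  induction k using Nat.strong_induction_on with
  | _ k ih =>
    intro hk
    have h1 : ∑ j ∈ Finset.range (k+1), xe n x (k - j) * (y j - z j) = 0 := by
      simp only [mul_sub, Finset.sum_sub_distrib]
      rw [hy k hk, hz k hk, sub_self]
    rw [Finset.sum_range_succ] at h1
    have h2 : ∑ j ∈ Finset.range k, xe n x (k - j) * (y j - z j) = 0 := by
      apply Finset.sum_eq_zero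
      intro j hj
      have hjk := Finset.mem_range.mp hj
      rw [ih j hjk (lt_trans hjk hk), sub_self, mul_zero]
    rw [h2, zero_add, Nat.sub_self, xe_zero n hn] at h1
    rcases mul_eq_zero.mp h1 with h | h
    · exact absurd h hx
    · exact sub_eq_zero.mp h

lemma diff_apply (m : Fin n) (x : Fin n → ℂ) :
    DifferentiableAt ℂ (fun y : Fin n → ℂ => y m) x :=
  (hasFDerivAt_apply m x).differentiableAt

lemma diff_xe (m : ℕ) (x : Fin n → ℂ) :
    DifferentiableAt ℂ (fun y : Fin n → ℂ => xe n y m) x := by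
  unfold xe
  by_cases h : m < n
  · simp only [dif_pos h]; exact diff_apply n _ x
  · simp only [dif_neg h]; exact differentiableAt_const 0

lemma G_diff (x : Fin n → ℂ) (hx : x ⟨0, hn⟩ ≠ 0) :
    ∀ k : ℕ, DifferentiableAt ℂ (fun y => G n hn y k) x := by
  intro k
  induction k using Nat.strong_induction_on with
  | _ k ih =>
    cases k with
    | zero =>
        simp only [G]
        exact (diff_apply n ⟨0, hn⟩ x).inv hx
    | succ k =>
        simp only [G]
        apply DifferentiableAt.mul
        · exact ((diff_apply n ⟨0, hn⟩ x).inv hx).neg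
        · apply DifferentiableAt.fun_sum
          intro j _
          exact (diff_xe n _ x).mul (ih j (Finset.mem_range.mp j.2))

/-- the lower-triangular Toeplitz matrix of multiplication by `z` -/
def T (z : Fin n → ℂ) : Matrix (Fin n) (Fin n) ℂ :=
  Matrix.of fun k j => if (j : ℕ) ≤ (k : ℕ) then xe n z ((k : ℕ) - (j : ℕ)) else 0

lemma T_mulVec (z w : Fin n → ℂ) (k : Fin n) :
    (T n z).mulVec w k
      = ∑ j ∈ Finset.range ((k : ℕ)+1), xe n z ((k : ℕ) - j) * xe n w j := by
  unfold Matrix.mulVec dotProduct T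
  have h1 : ∀ j : Fin n,
      (if (j : ℕ) ≤ (k : ℕ) then xe n z ((k : ℕ) - (j : ℕ)) else 0) * w j
        = if (j : ℕ) ≤ (k : ℕ) then xe n z ((k : ℕ) - (j : ℕ)) * xe n w (j : ℕ) else 0 := by
    intro j
    by_cases hj : (j : ℕ) ≤ (k : ℕ)
    · simp [hj, xe, j.isLt]
    · simp [hj]
  simp only [Matrix.of_apply]
  rw [Finset.sum_congr rfl (fun j _ => h1 j)]
  rw [Fin.sum_univ_eq_sum_range
    (fun j => if j ≤ (k : ℕ) then xe n z ((k : ℕ) - j) * xe n w j else 0) n]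
  rw [← Finset.sum_subset (Finset.range_subset_range.mpr k.isLt)]
  · exact Finset.sum_congr rfl (fun j hj => by
      rw [if_pos (Nat.lt_succ_iff.mp (Finset.mem_range.mp hj))])
  · intro j _ hj
    rw [if_neg]; simpa [Nat.lt_succ_iff] using hj

lemma T_det (z : Fin n → ℂ) : (T n z).det = (z ⟨0, hn⟩) ^ n := by
  rw [Matrix.det_of_lowerTriangular (T n z)]
  · have : ∀ k : Fin n, T n z k k = z ⟨0, hn⟩ := by
      intro k
      simp [T, xe, Nat.sub_self, hn]
    rw [Finset.prod_congr rfl (fun k _ => this k)]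
    simp
  · intro i j hij
    have : ¬ ((j : ℕ) ≤ (i : ℕ)) := by
      simp only [OrderDual.toDual_lt_toDual] at hij
      exact not_le.mpr (Fin.lt_iff_val_lt_val.mp hij)
    simp only [T, Matrix.of_apply]
    rw [if_neg this]

/-- reflection symmetry of the range-sum convolution -/
lemma range_sum_comm (a b : Fin n → ℂ) (k : ℕ) :
    ∑ j ∈ Finset.range (k+1), xe n a (k - j) * xe n b j
      = ∑ j ∈ Finset.range (k+1), xe n b (k - j) * xe n a j := by
  rw [← Finset.sum_range_reflect (fun j => xe n a (k - j) * xe n b j) (k+1)]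
  apply Finset.sum_congr rfl
  intro j hj
  have hjk : j ≤ k := Nat.lt_succ_iff.mp (Finset.mem_range.mp hj)
  have h1 : k + 1 - 1 - j = k - j := by omega
  have h2 : k - (k - j) = j := by omega
  rw [h1, h2, mul_comm]

lemma conv_eq_mulVec (a b : Fin n → ℂ) (k : Fin n) :
    (∑ i : Fin n, ∑ j : Fin n,
      if (i : ℕ) + (j : ℕ) = (k : ℕ) then a i * b j else 0)
    = (T n a).mulVec b k := by
  rw [double_sum_eq n a b (k : ℕ) k.isLt, ← T_mulVec]

lemma conv_eq_mulVec' (a b : Fin n → ℂ) (k : Fin n) :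
    (∑ i : Fin n, ∑ j : Fin n,
      if (i : ℕ) + (j : ℕ) = (k : ℕ) then a i * b j else 0)
    = (T n b).mulVec a k := by
  rw [double_sum_eq n a b (k : ℕ) k.isLt, range_sum_comm, ← T_mulVec]

end JacInv
theorem jacobian_of_inversion (n : ℕ) (hn : 0 < n)
    (ι : (Fin n → ℂ) → (Fin n → ℂ))
    (hinv : ∀ x : Fin n → ℂ, x ⟨0, hn⟩ ≠ 0 → ∀ k < n,
      (∑ i : Fin n, ∑ j : Fin n,
        if (i : ℕ) + (j : ℕ) = k then x i * ι x j else 0) =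
        if k = 0 then 1 else 0)
    (x : Fin n → ℂ) (hx : x ⟨0, hn⟩ ≠ 0) :
    LinearMap.det (fderiv ℂ ι x).toLinearMap
      = (-1) ^ n * (x ⟨0, hn⟩)⁻¹ ^ (2 * n) := by
  classical
  open JacInv ContinuousLinearMap in
  -- differentiability of the explicit inverse `Ghat`
  have hGdiff : DifferentiableAt ℂ (Ghat n hn) x :=
    differentiableAt_pi.mpr (fun k => G_diff n hn x hx (k : ℕ))
  set D := fderiv ℂ (Ghat n hn) x with hDdef
  have hD : HasFDerivAt (Ghat n hn) D x := hGdiff.hasFDerivAt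
  have hne : ∀ᶠ y in nhds x, y ⟨0, hn⟩ ≠ 0 :=
    ((continuous_apply (⟨0, hn⟩ : Fin n)).continuousAt).eventually_ne hx
  -- `ι` agrees with `Ghat` near `x`
  have hιG : ∀ y : Fin n → ℂ, y ⟨0, hn⟩ ≠ 0 → ι y = Ghat n hn y := by
    intro y hy
    funext k
    have hy' : ∀ m < n, ∑ j ∈ Finset.range (m+1), xe n y (m - j) * xe n (ι y) j
        = if m = 0 then 1 else 0 := by
      intro m hm
      rw [← double_sum_eq n y (ι y) m hm]
      exact hinv y hy m hm
    have hu := unique n hn y hy (fun j => xe n (ι y) j) (G n hn y) hy'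
      (fun m _ => G_spec n hn y hy m) (k : ℕ) k.isLt
    have h1 : xe n (ι y) (k : ℕ) = ι y k := by simp [xe, k.isLt]
    exact h1.symm.trans hu
  have hev : ι =ᶠ[nhds x] Ghat n hn := hne.mono hιG
  rw [Filter.EventuallyEq.fderiv_eq hev]
  -- differentiate the identity `x * Ghat x = 1`
  set L : (Fin n → ℂ) →L[ℂ] (Fin n → ℂ) :=
    ContinuousLinearMap.pi (fun k : Fin n => ∑ i : Fin n, ∑ j : Fin n,
      if (i : ℕ) + (j : ℕ) = (k : ℕ) then
        (x i • ((proj j).comp D) + Ghat n hn x j • (proj i : (Fin n → ℂ) →L[ℂ] ℂ))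
      else 0) with hLdef
  have hL : HasFDerivAt (fun y (k : Fin n) => ∑ i : Fin n, ∑ j : Fin n,
      if (i : ℕ) + (j : ℕ) = (k : ℕ) then y i * Ghat n hn y j else 0) L x := by
    apply hasFDerivAt_pi.mpr
    intro k
    apply HasFDerivAt.fun_sum
    intro i _
    apply HasFDerivAt.fun_sum
    intro j _
    by_cases hc : (i : ℕ) + (j : ℕ) = (k : ℕ)
    · simp only [if_pos hc]
      have h2 := ((proj j : (Fin n → ℂ) →L[ℂ] ℂ)).hasFDerivAt.comp x hD
      exact (hasFDerivAt_apply i x).mul h2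
    · simp only [if_neg hc]
      exact hasFDerivAt_const 0 x
  have hhconst : (fun y (k : Fin n) => ∑ i : Fin n, ∑ j : Fin n,
      if (i : ℕ) + (j : ℕ) = (k : ℕ) then y i * Ghat n hn y j else 0)
      =ᶠ[nhds x] (fun _ (k : Fin n) => if (k : ℕ) = 0 then (1 : ℂ) else 0) := by
    filter_upwards [hne] with y hy
    funext k
    rw [double_sum_eq n y (Ghat n hn y) (k : ℕ) k.isLt]
    rw [Finset.sum_congr rfl (fun j hj => by
      rw [xe_Ghat n hn y j
        (lt_of_le_of_lt (Nat.lt_succ_iff.mp (Finset.mem_range.mp hj)) k.isLt)])]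
    exact G_spec n hn y hy (k : ℕ)
  have hLzero : L = 0 := by
    rw [← hL.fderiv, Filter.EventuallyEq.fderiv_eq hhconst]
    exact fderiv_const_apply _
  -- key identity on the matrices
  have key : ∀ v : Fin n → ℂ,
      (T n x).mulVec (D v) = -((T n (Ghat n hn x)).mulVec v) := by
    intro v
    funext k
    have h0 : L v k = 0 := by rw [hLzero]; rfl
    rw [hLdef] at h0
    simp only [ContinuousLinearMap.pi_apply, ContinuousLinearMap.sum_apply,
      apply_ite (fun (f : (Fin n → ℂ) →L[ℂ] ℂ) => f v),
      ContinuousLinearMap.add_apply, ContinuousLinearMap.smul_apply,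
      ContinuousLinearMap.comp_apply, ContinuousLinearMap.proj_apply,
      ContinuousLinearMap.zero_apply, smul_eq_mul] at h0
    have h3 : (∑ i : Fin n, ∑ j : Fin n,
        if (i : ℕ) + (j : ℕ) = (k : ℕ) then x i * D v j else 0)
      + (∑ i : Fin n, ∑ j : Fin n,
        if (i : ℕ) + (j : ℕ) = (k : ℕ) then v i * Ghat n hn x j else 0) = 0 := by
      have e1 : ∀ i j : Fin n,
          (if (i : ℕ) + (j : ℕ) = (k : ℕ) then x i * D v j + Ghat n hn x j * v i else 0)
          = (if (i : ℕ) + (j : ℕ) = (k : ℕ) then x i * D v j else 0)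
            + (if (i : ℕ) + (j : ℕ) = (k : ℕ) then v i * Ghat n hn x j else 0) := by
        intro i j; split_ifs <;> ring
      rw [← Finset.sum_add_distrib]
      rw [Finset.sum_congr rfl (fun i _ => (Finset.sum_add_distrib).symm)]
      rw [Finset.sum_congr rfl (fun i _ => Finset.sum_congr rfl
        (fun j _ => (e1 i j).symm))]
      exact h0
    rw [conv_eq_mulVec n x (D v) k, conv_eq_mulVec' n v (Ghat n hn x) k] at h3
    have := eq_neg_of_add_eq_zero_left h3
    simpa using this
  -- pass to linear maps and take determinants
  have hlin : (Matrix.toLin' (T n x)) ∘ₗ (D.toLinearMap)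
      = Matrix.toLin' (-(T n (Ghat n hn x))) := by
    apply LinearMap.ext
    intro v
    simp only [LinearMap.comp_apply, Matrix.toLin'_apply,
      ContinuousLinearMap.coe_coe, Matrix.neg_mulVec]
    rw [key v]
  have hdet := congrArg LinearMap.det hlin
  rw [LinearMap.det_comp, LinearMap.det_toLin', LinearMap.det_toLin',
    Matrix.det_neg, T_det n hn, T_det n hn, Fintype.card_fin] at hdet
  have hG0 : Ghat n hn x ⟨0, hn⟩ = (x ⟨0, hn⟩)⁻¹ := by
    simp [Ghat, G]
  rw [hG0] at hdet
  set a := x ⟨0, hn⟩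
  set d := LinearMap.det (D.toLinearMap)
  calc d = (a⁻¹ ^ n * a ^ n) * d := by
        rw [inv_pow, inv_mul_cancel₀ (pow_ne_zero n hx), one_mul]
    _ = a⁻¹ ^ n * (a ^ n * d) := by ring
    _ = a⁻¹ ^ n * ((-1) ^ n * a⁻¹ ^ n) := by rw [hdet]
    _ = (-1) ^ n * a⁻¹ ^ (2 * n) := by rw [two_mul, pow_add]; ring
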